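/- Let 0 < a < b be coprime integers, θ = arccos(a/b) ∈ (0, π/2), n ≥ 2 an integer, 1 ≤ k ≤ n-1, and λ, μ ∈ ℚ such that (λ+μ)·√(b+a) and (μ-λ)·√(b-a) are algebraic integers. Then 4b·(λ·cos(kθ/n) + μ·cos((n-k)θ/n)) is an algebraic integer. -/

import Mathlib

open Polynomial

theorem stmt_5 (a b : ℕ) (ha : 0 < a) (hab : a < b) (hcop : Nat.Coprime a b)
    (n : ℕ) (hn : 2 ≤ n) (k : ℕ) (hk₁ : 1 ≤ k) (hk₂ : k ≤ n - 1)
    (l m : ℚ)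
    (h₁ : IsIntegral ℤ (((l : ℝ) + (m : ℝ)) * Real.sqrt ((b : ℝ) + a)))
    (h₂ : IsIntegral ℤ (((m : ℝ) - (l : ℝ)) * Real.sqrt ((b : ℝ) - a))) :
    IsIntegral ℤ (4 * (b : ℝ) *
      ((l : ℝ) * Real.cos ((k : ℝ) * Real.arccos ((a : ℝ) / b) / n) +
        (m : ℝ) * Real.cos (((n : ℝ) - k) * Real.arccos ((a : ℝ) / b) / n))) := by
  have hb0 : (0:ℝ) < b := by exact_mod_cast ha.trans hab
  have ha0 : (0:ℝ) < a := by exact_mod_cast ha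
  have habR : (a:ℝ) < b := by exact_mod_cast hab
  have hnN : 0 < n := by omega
  have hnR : (0:ℝ) < n := by exact_mod_cast hnN
  have hbC : (b:ℂ) ≠ 0 := by exact_mod_cast hb0.ne'
  set θ := Real.arccos ((a:ℝ)/b) with hθdef
  have h01 : (0:ℝ) ≤ (a:ℝ)/b := by positivity
  have hcos : Real.cos θ = (a:ℝ)/b :=
    Real.cos_arccos (by linarith) (by rw [div_le_one hb0]; exact habR.le)
  set s := Real.sqrt ((b:ℝ)^2 - (a:ℝ)^2) with hsdef
  have hs2 : s^2 = (b:ℝ)^2 - (a:ℝ)^2 := Real.sq_sqrt (by nlinarith)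
  have hsin : Real.sin θ = s / b := by
    rw [hθdef, Real.sin_arccos,
      show 1 - ((a:ℝ)/b)^2 = ((b:ℝ)^2 - (a:ℝ)^2)/(b:ℝ)^2 by field_simp,
      Real.sqrt_div (by nlinarith), Real.sqrt_sq hb0.le]
  have hs2c : (s:ℂ)^2 = (b:ℂ)^2 - (a:ℂ)^2 := by exact_mod_cast congrArg Complex.ofReal hs2
  -- quadratic integrality helper
  have hquad : ∀ c : ℂ, c^2 - 2*(a:ℂ)*c + (b:ℂ)^2 = 0 → IsIntegral ℤ c := by
    intro c hc
    refine ⟨X^2 - C (2*(a:ℤ)) * X + C ((b:ℤ)^2), ?_, ?_⟩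
    · monicity!
    · simp only [eval₂_add, eval₂_sub, eval₂_mul, eval₂_pow, eval₂_X, eval₂_C]
      simp only [algebraMap_int_eq, eq_intCast]
      push_cast
      linear_combination hc
  have hz1 : IsIntegral ℤ ((a:ℂ) + s*Complex.I) := hquad _ (by
    linear_combination (s:ℂ)^2 * Complex.I_sq - hs2c)
  have hz2 : IsIntegral ℤ ((a:ℂ) - s*Complex.I) := hquad _ (by
    linear_combination (s:ℂ)^2 * Complex.I_sq - hs2c)
  have hexp1 : (b:ℂ) * Complex.exp ((θ:ℝ) * Complex.I) = (a:ℂ) + s*Complex.I := by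
    rw [Complex.exp_mul_I, ← Complex.ofReal_cos, ← Complex.ofReal_sin, hcos, hsin]
    push_cast
    field_simp
  have hexp2 : (b:ℂ) * Complex.exp (((-θ):ℝ) * Complex.I) = (a:ℂ) - s*Complex.I := by
    rw [Complex.exp_mul_I, ← Complex.ofReal_cos, ← Complex.ofReal_sin,
      Real.cos_neg, Real.sin_neg, hcos, hsin]
    push_cast
    field_simp
    ring
  have hnat : ∀ N : ℕ, IsIntegral ℤ ((N:ℂ)) := fun N => ⟨X - C (N:ℤ), monic_X_sub_C _, by simp⟩
  have hI : IsIntegral ℤ (Complex.I) := ⟨X^2 + C 1, by monicity!, by simp⟩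
  have hcosC : ∀ r : ℝ, ((2 * Real.sqrt (2*(b:ℝ)) * Real.cos r : ℝ) : ℂ)
      = (Real.sqrt (2*(b:ℝ)) : ℂ) * Complex.exp ((r:ℝ) * Complex.I)
        + (Real.sqrt (2*(b:ℝ)) : ℂ) * Complex.exp (((-r):ℝ) * Complex.I) := by
    intro r
    have hcc : Complex.exp ((r:ℝ)*Complex.I) + Complex.exp (((-r):ℝ)*Complex.I)
        = 2 * ((Real.cos r : ℝ) : ℂ) := by
      rw [Complex.exp_mul_I, Complex.exp_mul_I, Complex.ofReal_neg, Complex.cos_neg,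
        Complex.sin_neg, ← Complex.ofReal_cos]
      ring
    rw [Complex.ofReal_mul, Complex.ofReal_mul, Complex.ofReal_ofNat]
    linear_combination -(hcc * (Real.sqrt (2*(b:ℝ)) : ℂ))
  have hsinC : ∀ r : ℝ, ((2 * Real.sqrt (2*(b:ℝ)) * Real.sin r : ℝ) : ℂ)
      = (-Complex.I) * ((Real.sqrt (2*(b:ℝ)) : ℂ) * Complex.exp ((r:ℝ) * Complex.I)
        - (Real.sqrt (2*(b:ℝ)) : ℂ) * Complex.exp (((-r):ℝ) * Complex.I)) := by
    intro r
    have hss : Complex.exp ((r:ℝ)*Complex.I) - Complex.exp (((-r):ℝ)*Complex.I)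
        = 2 * ((Real.sin r : ℝ) : ℂ) * Complex.I := by
      rw [Complex.exp_mul_I, Complex.exp_mul_I, Complex.ofReal_neg, Complex.cos_neg,
        Complex.sin_neg, ← Complex.ofReal_sin]
      ring
    rw [Complex.ofReal_mul, Complex.ofReal_mul, Complex.ofReal_ofNat]
    linear_combination Complex.I * (Real.sqrt (2*(b:ℝ)) : ℂ) * hss
      + 2 * (Real.sqrt (2*(b:ℝ)) : ℂ) * ((Real.sin r : ℝ) : ℂ) * Complex.I_sq
  -- key: √(2b) e^{i m' t/(2n)} is an algebraic integer when b e^{it} is, m' ≤ n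
  have key : ∀ (t : ℝ) (c : ℂ), IsIntegral ℤ c → (b:ℂ) * Complex.exp ((t:ℝ) * Complex.I) = c →
      ∀ m' : ℕ, m' ≤ n →
      IsIntegral ℤ ((Real.sqrt (2*(b:ℝ)) : ℂ) *
        Complex.exp ((((m':ℝ) * t / (2*(n:ℝ))):ℝ) * Complex.I)) := by
    intro t c hc hbc m' hm'
    apply IsIntegral.of_pow (n := 2*n) (by omega)
    have e1 : ((Real.sqrt (2*(b:ℝ)) : ℂ))^(2*n) = ((2:ℂ)*(b:ℂ))^n := by
      rw [pow_mul, ← Complex.ofReal_pow, Real.sq_sqrt (by positivity)]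
      push_cast
      ring
    have e2 : Complex.exp ((((m':ℝ) * t / (2*(n:ℝ))):ℝ) * Complex.I)^(2*n)
        = Complex.exp ((t:ℝ) * Complex.I)^m' := by
      rw [← Complex.exp_nat_mul, ← Complex.exp_nat_mul]
      congr 1
      have hnC : (n:ℂ) ≠ 0 := by exact_mod_cast hnR.ne'
      push_cast
      field_simp
    have e3 : ((2:ℂ)*(b:ℂ))^n = ((2^n * b^(n-m') : ℕ):ℂ) * (b:ℂ)^m' := by
      push_cast
      rw [mul_pow, mul_assoc, ← pow_add, Nat.sub_add_cancel hm']
    have hcalc : ((Real.sqrt (2*(b:ℝ)) : ℂ) *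
        Complex.exp ((((m':ℝ) * t / (2*(n:ℝ))):ℝ) * Complex.I))^(2*n)
        = ((2^n * b^(n-m') : ℕ):ℂ) * c^m' := by
      rw [mul_pow, e1, e2, e3, ← hbc, mul_pow]
      ring
    rw [hcalc]
    exact (hnat _).mul (hc.pow m')
  have hRC : ∀ x : ℝ, IsIntegral ℤ ((x:ℂ)) → IsIntegral ℤ x := by
    intro x h
    apply IsIntegral.tower_bot (A := ℝ) (B := ℂ) Complex.ofReal_injective
    rwa [Complex.coe_algebraMap]
  have cosKey : ∀ m' : ℕ, m' ≤ n →
      IsIntegral ℤ (2 * Real.sqrt (2*(b:ℝ)) * Real.cos ((m':ℝ) * θ / (2*(n:ℝ)))) := by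
    intro m' hm'
    apply hRC
    have g1 := key θ _ hz1 hexp1 m' hm'
    have g2 := key (-θ) _ hz2 hexp2 m' hm'
    rw [show (m':ℝ)*(-θ)/(2*(n:ℝ)) = -((m':ℝ)*θ/(2*(n:ℝ))) by ring] at g2
    rw [hcosC ((m':ℝ) * θ / (2*(n:ℝ)))]
    exact g1.add g2
  have sinKey : ∀ m' : ℕ, m' ≤ n →
      IsIntegral ℤ (2 * Real.sqrt (2*(b:ℝ)) * Real.sin ((m':ℝ) * θ / (2*(n:ℝ)))) := by
    intro m' hm'
    apply hRC
    have g1 := key θ _ hz1 hexp1 m' hm'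
    have g2 := key (-θ) _ hz2 hexp2 m' hm'
    rw [show (m':ℝ)*(-θ)/(2*(n:ℝ)) = -((m':ℝ)*θ/(2*(n:ℝ))) by ring] at g2
    rw [hsinC ((m':ℝ) * θ / (2*(n:ℝ)))]
    exact (hI.neg).mul (g1.sub g2)
  -- half angle facts
  have hθ0 : 0 ≤ θ := Real.arccos_nonneg _
  have hθpi : θ ≤ Real.pi := Real.arccos_le_pi _
  have hpi := Real.pi_pos
  have hcoshalf : Real.cos (θ/2) = Real.sqrt (((b:ℝ)+a)/(2*b)) := by
    rw [Real.cos_half (by linarith) hθpi, hcos,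
      show (1 + (a:ℝ)/b)/2 = ((b:ℝ)+a)/(2*b) by
        rw [div_eq_div_iff (by norm_num) (by positivity)]; field_simp]
  have hsinhalf : Real.sin (θ/2) = Real.sqrt (((b:ℝ)-a)/(2*b)) := by
    rw [Real.sin_half_eq_sqrt hθ0 (by linarith), hcos,
      show (1 - (a:ℝ)/b)/2 = ((b:ℝ)-a)/(2*b) by
        rw [div_eq_div_iff (by norm_num) (by positivity)]; field_simp]
  have h2b : Real.sqrt (2*(b:ℝ))^2 = 2*b := Real.sq_sqrt (by positivity)
  have hsq2b : Real.sqrt (2*(b:ℝ)) ≠ 0 := by positivity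
  have haux : Real.sqrt 2 ^ 2 * Real.sqrt ((b:ℝ)) ^ 2 = 2*(b:ℝ) := by
    rw [Real.sq_sqrt (by norm_num), Real.sq_sqrt hb0.le]
  have hA : 4*(b:ℝ)*Real.cos (θ/2) = Real.sqrt ((b:ℝ)+a) * (2*Real.sqrt (2*(b:ℝ))) := by
    rw [hcoshalf, Real.sqrt_div' _ (by positivity)]
    field_simp
    linear_combination (-2) * (Real.sq_sqrt (by positivity) : Real.sqrt ((b:ℝ)*2)^2 = b*2)
  have hB : 4*(b:ℝ)*Real.sin (θ/2) = Real.sqrt ((b:ℝ)-a) * (2*Real.sqrt (2*(b:ℝ))) := by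
    rw [hsinhalf, Real.sqrt_div' _ (by positivity)]
    field_simp
    linear_combination (-2 * Real.sqrt ((b:ℝ)-a)) * (Real.sq_sqrt (by positivity) : Real.sqrt ((b:ℝ)*2)^2 = b*2)
  -- main identity
  set d := ((n:ℝ) - 2*k) * θ / (2*(n:ℝ)) with hddef
  have hid1 : (k:ℝ)*θ/(n:ℝ) = θ/2 - d := by
    rw [hddef]; field_simp; ring
  have hid2 : ((n:ℝ)-k)*θ/(n:ℝ) = θ/2 + d := by
    rw [hddef]; field_simp; ring
  rw [hid1, hid2, Real.cos_sub, Real.cos_add]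
  rcases le_or_gt (2*k) n with hcase | hcase
  · have hm'n : n - 2*k ≤ n := by omega
    have hdm : d = ((n - 2*k : ℕ):ℝ) * θ / (2*(n:ℝ)) := by
      rw [hddef, Nat.cast_sub hcase]
      push_cast
      ring
    have hC := cosKey _ hm'n
    have hS := sinKey _ hm'n
    rw [← hdm] at hC hS
    have hfinal : 4 * (b:ℝ) *
        ((l:ℝ) * (Real.cos (θ/2) * Real.cos d + Real.sin (θ/2) * Real.sin d) +
         (m:ℝ) * (Real.cos (θ/2) * Real.cos d - Real.sin (θ/2) * Real.sin d))
        = (((l:ℝ) + (m:ℝ)) * Real.sqrt ((b:ℝ) + a)) * (2 * Real.sqrt (2*(b:ℝ)) * Real.cos d)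
          - (((m:ℝ) - (l:ℝ)) * Real.sqrt ((b:ℝ) - a)) * (2 * Real.sqrt (2*(b:ℝ)) * Real.sin d) := by
      linear_combination (((l:ℝ) + m) * Real.cos d) * hA - (((m:ℝ) - l) * Real.sin d) * hB
    rw [hfinal]
    exact (h₁.mul hC).sub (h₂.mul hS)
  · have hm'n : 2*k - n ≤ n := by omega
    have hdm : -d = ((2*k - n : ℕ):ℝ) * θ / (2*(n:ℝ)) := by
      rw [hddef, Nat.cast_sub hcase.le]
      push_cast
      ring
    have hC := cosKey _ hm'n
    have hS := sinKey _ hm'n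
    rw [← hdm] at hC hS
    rw [Real.cos_neg] at hC
    rw [Real.sin_neg] at hS
    have hfinal : 4 * (b:ℝ) *
        ((l:ℝ) * (Real.cos (θ/2) * Real.cos d + Real.sin (θ/2) * Real.sin d) +
         (m:ℝ) * (Real.cos (θ/2) * Real.cos d - Real.sin (θ/2) * Real.sin d))
        = (((l:ℝ) + (m:ℝ)) * Real.sqrt ((b:ℝ) + a)) * (2 * Real.sqrt (2*(b:ℝ)) * Real.cos d)
          + (((m:ℝ) - (l:ℝ)) * Real.sqrt ((b:ℝ) - a)) * (2 * Real.sqrt (2*(b:ℝ)) * (-Real.sin d)) := by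
      linear_combination (((l:ℝ) + m) * Real.cos d) * hA - (((m:ℝ) - l) * Real.sin d) * hB
    rw [hfinal]
    exact (h₁.mul hC).add (h₂.mul hS)
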